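/- Let φ, ψ ∈ C([t₀,t₀+η], B_r) where B_r is the closed ball of radius r around the identity in Diff^m(ℝ^d) (m ≥ 2) for the distance d_{m,∞}(φ,ψ) = max(‖φ−ψ‖_{m,∞}, ‖φ^{-1}−ψ^{-1}‖_{m,∞}). Then there is a constant C_r depending only on r such that for each t, ‖∇(Jφ(t))/Jφ(t) − ∇(Jψ(t))/Jψ(t)‖_∞ ≤ C_r ‖φ(t) − ψ(t)‖_{2,∞}. -/

import Mathlib

set_option maxHeartbeats 2000000

noncomputable section

/-- Jacobian determinant `Jφ(x) = det Dφ(x)`. -/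
def Jdet {d : ℕ} (φ : EuclideanSpace ℝ (Fin d) → EuclideanSpace ℝ (Fin d))
    (x : EuclideanSpace ℝ (Fin d)) : ℝ :=
  LinearMap.det (fderiv ℝ φ x :
    EuclideanSpace ℝ (Fin d) →ₗ[ℝ] EuclideanSpace ℝ (Fin d))

/-- The `C^k`-sup norm `‖f‖_{k,∞} = Σ_{j≤k} sup_x ‖D^j f(x)‖`. -/
def cSupNorm {d : ℕ} (k : ℕ)
    (f : EuclideanSpace ℝ (Fin d) → EuclideanSpace ℝ (Fin d)) : ℝ :=
  ∑ j ∈ Finset.range (k + 1), ⨆ x, ‖iteratedFDeriv ℝ j f x‖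

namespace Stmt12Aux

variable {d : ℕ}

local notation "E" => EuclideanSpace ℝ (Fin d)

/-- The determinant as a function on continuous linear endomorphisms. -/
def Ddet (A : EuclideanSpace ℝ (Fin d) →L[ℝ] EuclideanSpace ℝ (Fin d)) : ℝ :=
  LinearMap.det (A : EuclideanSpace ℝ (Fin d) →ₗ[ℝ] EuclideanSpace ℝ (Fin d))

lemma contDiff_Ddet : ContDiff ℝ ⊤ (Ddet (d := d)) := by
  set b := PiLp.basisFun 2 ℝ (Fin d) with hb
  have key : ∀ A : E →L[ℝ] E, Ddet A
      = ∑ σ : Equiv.Perm (Fin d), ((Equiv.Perm.sign σ : ℤ) : ℝ) * ∏ i, (A (b i)) (σ i) := by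
    intro A
    rw [Ddet, ← LinearMap.det_toMatrix b, Matrix.det_apply]
    simp [LinearMap.toMatrix_apply, Units.smul_def, zsmul_eq_mul, hb]
  simp only [funext key]
  apply ContDiff.sum
  intro σ _
  apply ContDiff.mul contDiff_const
  apply contDiff_prod
  intro i _
  exact ((EuclideanSpace.proj (σ i) : E →L[ℝ] ℝ).comp
    ((ContinuousLinearMap.apply ℝ E (b i)) : (E →L[ℝ] E) →L[ℝ] E)).contDiff

lemma norm_fderiv_eq {F : Type*} [NormedAddCommGroup F] [NormedSpace ℝ F] (f : E → F) (x : E) :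
    ‖fderiv ℝ f x‖ = ‖iteratedFDeriv ℝ 1 f x‖ := by
  rw [← norm_iteratedFDeriv_fderiv (n := 0), norm_iteratedFDeriv_zero]

lemma norm_fderiv_fderiv_eq {F : Type*} [NormedAddCommGroup F] [NormedSpace ℝ F] (f : E → F) (x : E) :
    ‖fderiv ℝ (fderiv ℝ f) x‖ = ‖iteratedFDeriv ℝ 2 f x‖ := by
  rw [norm_fderiv_eq, norm_iteratedFDeriv_fderiv]

lemma Ddet_mul (A B : E →L[ℝ] E) : Ddet (A.comp B) = Ddet A * Ddet B := by
  simp only [Ddet, ContinuousLinearMap.coe_comp]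
  exact LinearMap.det_comp _ _

lemma Ddet_id : Ddet (ContinuousLinearMap.id ℝ E) = 1 := by
  simp [Ddet]

end Stmt12Aux

open Stmt12Aux in
/-- for `C^m` diffeomorphisms `φ, ψ` (with `C^m` inverses) in the
ball `B_r` around the identity (for `d_{m,∞}`), there is a constant `C_r`
depending only on `r` (and `m`, `d`) with
`‖∇(Jφ)/Jφ − ∇(Jψ)/Jψ‖_∞ ≤ C_r ‖φ − ψ‖_{2,∞}`. -/
theorem stmt12 (d m : ℕ) (hm : 2 ≤ m) (r : ℝ) (hr : 0 < r) :
    ∃ C : ℝ, 0 < C ∧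
      ∀ φ ψ φi ψi : EuclideanSpace ℝ (Fin d) → EuclideanSpace ℝ (Fin d),
        ContDiff ℝ m φ → ContDiff ℝ m ψ →
        ContDiff ℝ m φi → ContDiff ℝ m ψi →
        (∀ x, φi (φ x) = x) → (∀ x, φ (φi x) = x) →
        (∀ x, ψi (ψ x) = x) → (∀ x, ψ (ψi x) = x) →
        (∀ k ≤ m, ∀ x, ‖iteratedFDeriv ℝ k (fun y => φ y - y) x‖ ≤ r) →
        (∀ k ≤ m, ∀ x, ‖iteratedFDeriv ℝ k (fun y => ψ y - y) x‖ ≤ r) →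
        (∀ k ≤ m, ∀ x, ‖iteratedFDeriv ℝ k (fun y => φi y - y) x‖ ≤ r) →
        (∀ k ≤ m, ∀ x, ‖iteratedFDeriv ℝ k (fun y => ψi y - y) x‖ ≤ r) →
        ∀ x, ‖(Jdet φ x)⁻¹ • gradient (Jdet φ) x
                - (Jdet ψ x)⁻¹ • gradient (Jdet ψ) x‖ ≤
          C * cSupNorm 2 (fun z => φ z - ψ z) := by
  classical
  set E' := EuclideanSpace ℝ (Fin d)
  set CL := E' →L[ℝ] E' with hCL
  have hm1 : (1 : WithTop ℕ∞) ≤ (m : WithTop ℕ∞) := by exact_mod_cast Nat.one_le_of_lt hm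
  have hm2 : (2 : WithTop ℕ∞) ≤ (m : WithTop ℕ∞) := by exact_mod_cast hm
  -- compactness bounds for `Ddet` and its derivatives on the ball of radius `1 + r`
  have hD : ContDiff ℝ ⊤ (Ddet (d := d)) := contDiff_Ddet
  have hD' : ContDiff ℝ ⊤ (fderiv ℝ (Ddet (d := d))) := hD.fderiv_right le_top
  set K : Set CL := Metric.closedBall 0 (1 + r) with hK
  have hKc : IsCompact K := isCompact_closedBall _ _
  obtain ⟨c₀', hc₀'⟩ := hKc.exists_bound_of_continuousOn hD.continuous.continuousOn
  obtain ⟨c₁', hc₁'⟩ := hKc.exists_bound_of_continuousOn (E := CL →L[ℝ] ℝ)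
    (show ContinuousOn (fderiv ℝ (Ddet (d := d))) K from hD'.continuous.continuousOn)
  obtain ⟨c₂', hc₂'⟩ :=
    (hD'.contDiffOn (s := K)).exists_lipschitzOnWith (by simp) (convex_closedBall _ _) hKc
  set c₀ := max c₀' 1 with hc₀def
  set c₁ := max c₁' 1 with hc₁def
  set c₂ := max (c₂' : ℝ) 1 with hc₂def
  have hc₀1 : (1:ℝ) ≤ c₀ := le_max_right _ _
  have hc₁1 : (1:ℝ) ≤ c₁ := le_max_right _ _
  have hc₂1 : (1:ℝ) ≤ c₂ := le_max_right _ _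
  have hc₀ : ∀ A ∈ K, ‖Ddet A‖ ≤ c₀ := fun A hA => (hc₀' A hA).trans (le_max_left _ _)
  have hc₁ : ∀ A ∈ K, ‖fderiv ℝ Ddet A‖ ≤ c₁ := fun A hA => (hc₁' A hA).trans (le_max_left _ _)
  -- Lipschitz bounds on `K`
  have lip₁ : ∀ A ∈ K, ∀ B ∈ K, ‖Ddet A - Ddet B‖ ≤ c₁ * ‖A - B‖ := by
    intro A hA B hB
    exact (convex_closedBall _ _).norm_image_sub_le_of_norm_fderiv_le
      (fun y _ => (hD.differentiable (by simp)).differentiableAt) hc₁ hB hA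
  have lip₂ : ∀ A ∈ K, ∀ B ∈ K, ‖fderiv ℝ Ddet A - fderiv ℝ Ddet B‖ ≤ c₂ * ‖A - B‖ := by
    intro A hA B hB
    exact (hc₂'.norm_sub_le hA hB).trans
      (mul_le_mul_of_nonneg_right (le_max_left _ _) (norm_nonneg _))
  set C' : ℝ := c₀ * c₀ * c₁ * c₁ * r + c₀ * c₂ * r + c₀ * c₁ with hC'def
  have hC'pos : 0 < C' := by positivity
  refine ⟨2 * C', by positivity, ?_⟩
  intro φ ψ φi ψi hφ hψ hφi hψi hφiφ hφφi hψiψ hψψi hbφ hbψ hbφi hbψi x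
  -- differentiability facts
  have hdφ : Differentiable ℝ φ := hφ.differentiable (by exact_mod_cast (by omega : m ≠ 0))
  have hdψ : Differentiable ℝ ψ := hψ.differentiable (by exact_mod_cast (by omega : m ≠ 0))
  have hdφi : Differentiable ℝ φi := hφi.differentiable (by exact_mod_cast (by omega : m ≠ 0))
  have hdψi : Differentiable ℝ ψi := hψi.differentiable (by exact_mod_cast (by omega : m ≠ 0))
  have hdφ' : Differentiable ℝ (fderiv ℝ φ) :=
    (hφ.fderiv_right (m := 1) (by exact_mod_cast hm2)).differentiable one_ne_zero
  have hdψ' : Differentiable ℝ (fderiv ℝ ψ) :=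
    (hψ.fderiv_right (m := 1) (by exact_mod_cast hm2)).differentiable one_ne_zero
  -- first derivative bounds (membership in `K`)
  have memK : ∀ (f : E' → E'), ContDiff ℝ m f →
      (∀ k ≤ m, ∀ x, ‖iteratedFDeriv ℝ k (fun y => f y - y) x‖ ≤ r) →
      ∀ z, fderiv ℝ f z ∈ K := by
    intro f hf hbf z
    have hdf : Differentiable ℝ f := hf.differentiable (by exact_mod_cast (by omega : m ≠ 0))
    have h1 : fderiv ℝ (fun y => f y - y) z = fderiv ℝ f z - ContinuousLinearMap.id ℝ E' := by
      have := fderiv_fun_sub (hdf z) (differentiableAt_id (𝕜 := ℝ) (x := z))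
      simpa [fderiv_id] using this
    have h2 : ‖fderiv ℝ f z - ContinuousLinearMap.id ℝ E'‖ ≤ r := by
      rw [← h1, norm_fderiv_eq]
      exact hbf 1 (by omega) z
    rw [hK, Metric.mem_closedBall, dist_zero_right]
    calc ‖fderiv ℝ f z‖
        ≤ ‖fderiv ℝ f z - ContinuousLinearMap.id ℝ E'‖ + ‖ContinuousLinearMap.id ℝ E'‖ := by
          have h := norm_add_le (fderiv ℝ f z - ContinuousLinearMap.id ℝ E')
            (ContinuousLinearMap.id ℝ E')
          rwa [sub_add_cancel] at h
      _ ≤ r + 1 := add_le_add h2 ContinuousLinearMap.norm_id_le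
      _ = 1 + r := by ring
  -- second derivative bounds
  have sndBound : ∀ (f : E' → E'), ContDiff ℝ m f →
      (∀ k ≤ m, ∀ x, ‖iteratedFDeriv ℝ k (fun y => f y - y) x‖ ≤ r) →
      ∀ z, ‖fderiv ℝ (fderiv ℝ f) z‖ ≤ r := by
    intro f hf hbf z
    have hdf : Differentiable ℝ f := hf.differentiable (by exact_mod_cast (by omega : m ≠ 0))
    have h1 : fderiv ℝ (fun y => f y - y)
        = fun y => fderiv ℝ f y - ContinuousLinearMap.id ℝ E' := by
      funext y
      have := fderiv_fun_sub (hdf y) (differentiableAt_id (𝕜 := ℝ) (x := y))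
      simpa [fderiv_id] using this
    have h2 : fderiv ℝ (fderiv ℝ (fun y => f y - y)) z = fderiv ℝ (fderiv ℝ f) z := by
      rw [h1]
      exact fderiv_sub_const (𝕜 := ℝ) (f := fderiv ℝ f) (x := z) (ContinuousLinearMap.id ℝ E')
    have := hbf 2 hm z
    rw [← norm_fderiv_fderiv_eq, h2] at this
    exact this
  -- inverse determinant bounds
  have invBound : ∀ (f fi : E' → E'), ContDiff ℝ m f → ContDiff ℝ m fi →
      (∀ y, fi (f y) = y) → (∀ y, f (fi y) = y) →
      (∀ k ≤ m, ∀ x, ‖iteratedFDeriv ℝ k (fun y => fi y - y) x‖ ≤ r) →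
      ∀ z, Jdet f z ≠ 0 ∧ |(Jdet f z)⁻¹| ≤ c₀ := by
    intro f fi hf hfi hfif hffi hbfi z
    have hdf : Differentiable ℝ f := hf.differentiable (by exact_mod_cast (by omega : m ≠ 0))
    have hdfi : Differentiable ℝ fi := hfi.differentiable (by exact_mod_cast (by omega : m ≠ 0))
    have hcomp : fderiv ℝ f (fi (f z)) ∘L fderiv ℝ fi (f z) = ContinuousLinearMap.id ℝ E' := by
      have h1 : (f ∘ fi) = id := funext hffi
      have h2 := fderiv_comp (f z) (hdf (fi (f z))) (hdfi (f z))
      rw [h1, fderiv_id] at h2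
      exact h2.symm
    rw [hfif z] at hcomp
    have hdet : Jdet f z * Ddet (fderiv ℝ fi (f z)) = 1 := by
      have := congrArg Ddet hcomp
      rwa [Ddet_mul, Ddet_id] at this
    constructor
    · intro h0
      rw [h0, zero_mul] at hdet
      exact one_ne_zero hdet.symm
    · have hne : Jdet f z ≠ 0 := by
        intro h0; rw [h0, zero_mul] at hdet; exact one_ne_zero hdet.symm
      have hinv : (Jdet f z)⁻¹ = Ddet (fderiv ℝ fi (f z)) :=
        eq_inv_of_mul_eq_one_left (by linarith [mul_comm (Jdet f z) (Ddet (fderiv ℝ fi (f z)))] : Ddet (fderiv ℝ fi (f z)) * Jdet f z = 1) |>.symm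
      rw [hinv, ← Real.norm_eq_abs]
      exact hc₀ _ (memK fi hfi hbfi (f z))
  -- gradient chain rule
  have grad_eq : ∀ (f : E' → E'), ContDiff ℝ (m : ℕ) f → ∀ z,
      gradient (Jdet f) z = (InnerProductSpace.toDual ℝ E').symm
        ((fderiv ℝ Ddet (fderiv ℝ f z)).comp (fderiv ℝ (fderiv ℝ f) z)) := by
    intro f hf z
    have hdf' : Differentiable ℝ (fderiv ℝ f) :=
      (hf.fderiv_right (m := 1) (by exact_mod_cast hm2)).differentiable one_ne_zero
    have hJ : Jdet f = Ddet ∘ (fderiv ℝ f) := rfl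
    have hfd : fderiv ℝ (Jdet f) z
        = (fderiv ℝ Ddet (fderiv ℝ f z)).comp (fderiv ℝ (fderiv ℝ f) z) := by
      rw [hJ]
      exact fderiv_comp z ((hD.differentiable (by simp)) _) (hdf' z)
    have : gradient (Jdet f) z = (InnerProductSpace.toDual ℝ E').symm (fderiv ℝ (Jdet f) z) :=
      rfl
    rw [this, hfd]
  set A₁ := fderiv ℝ φ x with hA₁
  set A₂ := fderiv ℝ ψ x with hA₂
  set B₁ := fderiv ℝ (fderiv ℝ φ) x with hB₁e
  set B₂ := fderiv ℝ (fderiv ℝ ψ) x with hB₂e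
  set L₁ := (fderiv ℝ Ddet A₁).comp B₁ with hL₁e
  set L₂ := (fderiv ℝ Ddet A₂).comp B₂ with hL₂e
  have hA₁K : A₁ ∈ K := memK φ hφ hbφ x
  have hA₂K : A₂ ∈ K := memK ψ hψ hbψ x
  have hB₁ : ‖B₁‖ ≤ r := sndBound φ hφ hbφ x
  have hB₂ : ‖B₂‖ ≤ r := sndBound ψ hψ hbψ x
  obtain ⟨ha0, hainv⟩ := invBound φ φi hφ hφi hφiφ hφφi hbφi x
  obtain ⟨hb0, hbinv⟩ := invBound ψ ψi hψ hψi hψiψ hψψi hbψi x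
  have lhs_eq : ‖(Jdet φ x)⁻¹ • gradient (Jdet φ) x - (Jdet ψ x)⁻¹ • gradient (Jdet ψ) x‖
      = ‖(Jdet φ x)⁻¹ • L₁ - (Jdet ψ x)⁻¹ • L₂‖ := by
    rw [grad_eq φ hφ x, grad_eq ψ hψ x, ← map_smul, ← map_smul, ← map_sub,
      LinearIsometryEquiv.norm_map]
  rw [lhs_eq]
  set N := cSupNorm 2 (fun z => φ z - ψ z) with hNe
  -- difference of jets controlled by `N`
  have hjb : ∀ j, j ≤ m → ∀ z, ‖iteratedFDeriv ℝ j (fun z => φ z - ψ z) z‖ ≤ r + r := by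
    intro j hj z
    have hcj : (j : WithTop ℕ∞) ≤ (m : WithTop ℕ∞) := by exact_mod_cast hj
    have hfφ : ContDiff ℝ (j : ℕ) (fun y => φ y - y) :=
      (hφ.sub contDiff_id).of_le hcj
    have hfψ : ContDiff ℝ (j : ℕ) (fun y => ψ y - y) :=
      (hψ.sub contDiff_id).of_le hcj
    have heq : (fun z : E' => φ z - ψ z)
        = (fun z : E' => φ z - z) + (-(fun z : E' => ψ z - z)) := by
      funext z; simp only [Pi.add_apply, Pi.neg_apply]; abel
    rw [heq, iteratedFDeriv_add_apply hfφ.contDiffAt (by exact hfψ.neg.contDiffAt), iteratedFDeriv_neg_apply]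
    calc ‖iteratedFDeriv ℝ j (fun y => φ y - y) z + -iteratedFDeriv ℝ j (fun y => ψ y - y) z‖
        ≤ ‖iteratedFDeriv ℝ j (fun y => φ y - y) z‖
          + ‖iteratedFDeriv ℝ j (fun y => ψ y - y) z‖ := by
          refine le_trans (norm_add_le _ _) ?_
          rw [norm_neg]
      _ ≤ r + r := add_le_add (hbφ j hj z) (hbψ j hj z)
  have hbddrange : ∀ j, j ≤ m →
      BddAbove (Set.range fun z => ‖iteratedFDeriv ℝ j (fun z => φ z - ψ z) z‖) := by
    intro j hj
    exact ⟨r + r, by rintro _ ⟨z, rfl⟩; exact hjb j hj z⟩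
  have hterm : ∀ j, j < 3 →
      (⨆ z, ‖iteratedFDeriv ℝ j (fun z => φ z - ψ z) z‖) ≤ N := by
    intro j hj
    exact Finset.single_le_sum
      (f := fun i => ⨆ z, ‖iteratedFDeriv ℝ i (fun z => φ z - ψ z) z‖)
      (fun i _ => Real.iSup_nonneg fun z => norm_nonneg _) (Finset.mem_range.mpr hj)
  have hΔAeq : A₁ - A₂ = fderiv ℝ (fun z => φ z - ψ z) x :=
    (fderiv_sub (hdφ x) (hdψ x)).symm
  have hΔBeq : B₁ - B₂ = fderiv ℝ (fderiv ℝ (fun z => φ z - ψ z)) x := by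
    have h1 : fderiv ℝ (fun z => φ z - ψ z) = fun y => fderiv ℝ φ y - fderiv ℝ ψ y := by
      funext y; exact fderiv_sub (hdφ y) (hdψ y)
    rw [h1, fderiv_fun_sub (hdφ' x) (hdψ' x)]
  have hΔA : ‖A₁ - A₂‖ ≤ N := by
    rw [hΔAeq, norm_fderiv_eq]
    exact le_trans (le_ciSup (hbddrange 1 (by omega)) x) (hterm 1 (by omega))
  have hΔB : ‖B₁ - B₂‖ ≤ N := by
    rw [hΔBeq, norm_fderiv_fderiv_eq]
    exact le_trans (le_ciSup (hbddrange 2 hm) x) (hterm 2 (by omega))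
  have hN0 : 0 ≤ N := le_trans (norm_nonneg _) hΔA
  -- main algebraic estimate
  have key : (Jdet φ x)⁻¹ • L₁ - (Jdet ψ x)⁻¹ • L₂
      = ((Jdet φ x)⁻¹ - (Jdet ψ x)⁻¹) • L₁ + (Jdet ψ x)⁻¹ • (L₁ - L₂) := by
    rw [sub_smul, smul_sub]; abel
  have hL₁ : ‖L₁‖ ≤ c₁ * r :=
    le_trans (ContinuousLinearMap.opNorm_comp_le _ _)
      (mul_le_mul (hc₁ _ hA₁K) hB₁ (norm_nonneg _) (by linarith))
  have hLdiff : ‖L₁ - L₂‖ ≤ c₂ * ‖A₁ - A₂‖ * r + c₁ * ‖B₁ - B₂‖ := by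
    have hsplit : L₁ - L₂ = (fderiv ℝ Ddet A₁ - fderiv ℝ Ddet A₂).comp B₁
        + (fderiv ℝ Ddet A₂).comp (B₁ - B₂) := by
      rw [ContinuousLinearMap.sub_comp, ContinuousLinearMap.comp_sub]; abel
    rw [hsplit]
    refine le_trans (norm_add_le _ _) (add_le_add ?_ ?_)
    · refine le_trans (ContinuousLinearMap.opNorm_comp_le _ _) ?_
      calc ‖fderiv ℝ Ddet A₁ - fderiv ℝ Ddet A₂‖ * ‖B₁‖
          ≤ (c₂ * ‖A₁ - A₂‖) * r :=
            mul_le_mul (lip₂ A₁ hA₁K A₂ hA₂K) hB₁ (ContinuousLinearMap.opNorm_nonneg _) (by positivity)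
        _ = c₂ * ‖A₁ - A₂‖ * r := by ring
    · exact le_trans (ContinuousLinearMap.opNorm_comp_le _ _)
        (mul_le_mul (hc₁ _ hA₂K) le_rfl (norm_nonneg _) (by linarith))
  have haD : Jdet φ x = Ddet A₁ := rfl
  have hbD : Jdet ψ x = Ddet A₂ := rfl
  have hinvdiff : |(Jdet φ x)⁻¹ - (Jdet ψ x)⁻¹| ≤ c₀ * c₀ * (c₁ * ‖A₁ - A₂‖) := by
    have heq2 : (Jdet φ x)⁻¹ - (Jdet ψ x)⁻¹
        = (Jdet φ x)⁻¹ * (Jdet ψ x)⁻¹ * (Jdet ψ x - Jdet φ x) := by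
      field_simp
    rw [heq2, abs_mul, abs_mul]
    have h1 : |Jdet ψ x - Jdet φ x| ≤ c₁ * ‖A₁ - A₂‖ := by
      rw [haD, hbD, ← Real.norm_eq_abs]
      have := lip₁ A₂ hA₂K A₁ hA₁K
      rwa [norm_sub_rev A₂ A₁] at this
    calc |(Jdet φ x)⁻¹| * |(Jdet ψ x)⁻¹| * |Jdet ψ x - Jdet φ x|
        ≤ (c₀ * c₀) * (c₁ * ‖A₁ - A₂‖) := by
          apply mul_le_mul _ h1 (abs_nonneg _) (by positivity)
          exact mul_le_mul hainv hbinv (abs_nonneg _) (by linarith)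
      _ = c₀ * c₀ * (c₁ * ‖A₁ - A₂‖) := by ring
  calc ‖(Jdet φ x)⁻¹ • L₁ - (Jdet ψ x)⁻¹ • L₂‖
      = ‖((Jdet φ x)⁻¹ - (Jdet ψ x)⁻¹) • L₁ + (Jdet ψ x)⁻¹ • (L₁ - L₂)‖ := by rw [key]
    _ ≤ |(Jdet φ x)⁻¹ - (Jdet ψ x)⁻¹| * ‖L₁‖ + |(Jdet ψ x)⁻¹| * ‖L₁ - L₂‖ := by
        refine le_trans (norm_add_le _ _) ?_
        rw [norm_smul, norm_smul, Real.norm_eq_abs, Real.norm_eq_abs]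
    _ ≤ (c₀ * c₀ * (c₁ * ‖A₁ - A₂‖)) * (c₁ * r)
        + c₀ * (c₂ * ‖A₁ - A₂‖ * r + c₁ * ‖B₁ - B₂‖) := by
        refine add_le_add ?_ ?_
        · exact mul_le_mul hinvdiff hL₁ (norm_nonneg _) (by positivity)
        · exact mul_le_mul hbinv hLdiff (norm_nonneg _) (by linarith)
    _ ≤ 2 * C' * N := by
        have hp : ‖A₁ - A₂‖ ≤ N := hΔA
        have hq : ‖B₁ - B₂‖ ≤ N := hΔB
        have e1 : c₀ * c₀ * c₁ * c₁ * r * ‖A₁ - A₂‖ ≤ c₀ * c₀ * c₁ * c₁ * r * N :=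
          mul_le_mul_of_nonneg_left hp (by positivity)
        have e2 : c₀ * c₂ * r * ‖A₁ - A₂‖ ≤ c₀ * c₂ * r * N :=
          mul_le_mul_of_nonneg_left hp (by positivity)
        have e3 : c₀ * c₁ * ‖B₁ - B₂‖ ≤ c₀ * c₁ * N :=
          mul_le_mul_of_nonneg_left hq (by positivity)
        have hC'N : 0 ≤ C' * N := mul_nonneg (le_of_lt hC'pos) hN0
        nlinarith [e1, e2, e3]
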